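/- For θ ∈ ℝ^p, let f̃_n(s | θ) = N(s; s(θ), a_n⁻²A(θ)) where s : ℝ^p → ℝ^d is C¹, A : ℝ^p → ℝ^{d×d} is C¹ and positive definite near θ₀, and a_n → ∞. Fix v ∈ ℝ^d, ε_n with a_n ε_n → c_ε < ∞, and s_obs with W_obs := a_n A(θ₀)^{-1/2}(s_obs − s(θ₀)) bounded in probability. Then for any compact K ⊂ ℝ^p, sup_{t∈K} | log[ f̃_n(s_obs + ε_n v | θ₀ + a_n⁻¹ t) / f̃_n(s_obs + ε_n v | θ₀) ] − tᵀ I(θ₀) β₀ {A(θ₀)^{1/2} W_obs + c_ε v} + (1/2) tᵀ I(θ₀) t | → 0 in probability as n → ∞, where I(θ₀) = Ds(θ₀)ᵀ A(θ₀)⁻¹ Ds(θ₀) is assumed full rank and β₀ = I(θ₀)⁻¹ Ds(θ₀)ᵀ A(θ₀)⁻¹. -/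

import Mathlib

open MeasureTheory Matrix Filter Real
open scoped Topology

/-- Multivariate normal density `N(x; μ, Σ)` on `ℝ^k`. -/
noncomputable def gaussDensity (k : ℕ) (S : Matrix (Fin k) (Fin k) ℝ)
    (μ x : Fin k → ℝ) : ℝ :=
  (2 * π) ^ (-(k : ℝ) / 2) * S.det ^ (-(1 : ℝ) / 2) *
    Real.exp (-(1 / 2) * ((x - μ) ⬝ᵥ (S⁻¹ *ᵥ (x - μ))))

/-- Euclidean norm of a vector in `ℝ^k`. -/
noncomputable def evnorm {k : ℕ} (x : Fin k → ℝ) : ℝ := Real.sqrt (x ⬝ᵥ x)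

section Helpers

lemma rank_full_isUnit {p : ℕ} (M : Matrix (Fin p) (Fin p) ℝ) (h : M.rank = p) :
    IsUnit M.det := by
  have hr : LinearMap.range M.mulVecLin = ⊤ := by
    apply Submodule.eq_top_of_finrank_eq
    rw [← Matrix.rank, h, Module.finrank_pi]
    simp
  have hsurj : Function.Surjective M.mulVecLin := LinearMap.range_eq_top.mp hr
  have hN : ∀ j, ∃ x : Fin p → ℝ, M *ᵥ x = Pi.single j 1 := fun j => hsurj _
  choose N hNspec using hN
  apply Matrix.isUnit_det_of_right_inverse (B := Matrix.of fun i j => N j i)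
  ext i j
  have h2 : (M *ᵥ N j) i = (Pi.single j (1:ℝ) : Fin p → ℝ) i := by rw [hNspec]
  simp only [Matrix.mulVec, dotProduct] at h2
  simp only [Matrix.mul_apply, Matrix.of_apply, Matrix.one_apply]
  rw [h2, Pi.single_apply]

lemma dot_bound {d : ℕ} (M : Matrix (Fin d) (Fin d) ℝ) (x y : Fin d → ℝ)
    (c X Y : ℝ) (hM : ∀ i j, |M i j| ≤ c) (hx : ∀ i, |x i| ≤ X) (hy : ∀ i, |y i| ≤ Y)
    (hX : 0 ≤ X) (hc : 0 ≤ c) :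
    |x ⬝ᵥ (M *ᵥ y)| ≤ d * d * c * X * Y := by
  have h1 : |x ⬝ᵥ (M *ᵥ y)| ≤ ∑ i, ∑ j, |x i| * |M i j| * |y j| := by
    simp only [dotProduct, Matrix.mulVec]
    refine (Finset.abs_sum_le_sum_abs _ _).trans ?_
    apply Finset.sum_le_sum
    intro i _
    rw [abs_mul]
    calc |x i| * |∑ j, M i j * y j| ≤ |x i| * ∑ j, |M i j| * |y j| := by
          apply mul_le_mul_of_nonneg_left _ (abs_nonneg _)
          refine (Finset.abs_sum_le_sum_abs _ _).trans ?_
          apply Finset.sum_le_sum; intro j _; rw [abs_mul]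
      _ = ∑ j, |x i| * |M i j| * |y j| := by rw [Finset.mul_sum]; ring_nf
  refine h1.trans ?_
  calc ∑ i, ∑ j, |x i| * |M i j| * |y j| ≤ ∑ _i : Fin d, ∑ _j : Fin d, X * c * Y := by
        apply Finset.sum_le_sum; intro i _; apply Finset.sum_le_sum; intro j _
        apply mul_le_mul (mul_le_mul (hx i) (hM i j) (abs_nonneg _) hX) (hy j) (abs_nonneg _)
        positivity
    _ = d * d * c * X * Y := by simp [Finset.sum_const]; ring

lemma entry_bound {m k : ℕ} (M : Matrix (Fin m) (Fin k) ℝ) :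
    ∃ C : ℝ, 0 ≤ C ∧ ∀ i j, |M i j| ≤ C := by
  refine ⟨∑ i, ∑ j, |M i j|, by positivity, fun i j => ?_⟩
  calc |M i j| ≤ ∑ j', |M i j'| := Finset.single_le_sum (f := fun j' => |M i j'|)
        (fun _ _ => abs_nonneg _) (Finset.mem_univ j)
    _ ≤ ∑ i', ∑ j', |M i' j'| := Finset.single_le_sum (f := fun i' => ∑ j', |M i' j'|)
        (fun _ _ => Finset.sum_nonneg fun _ _ => abs_nonneg _) (Finset.mem_univ i)

lemma vec_entry_bound {k : ℕ} (v : Fin k → ℝ) : ∃ C : ℝ, 0 ≤ C ∧ ∀ i, |v i| ≤ C := by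
  refine ⟨∑ i, |v i|, by positivity, fun i => Finset.single_le_sum (f := fun i => |v i|)
    (fun _ _ => abs_nonneg _) (Finset.mem_univ i)⟩

lemma mulVec_entry_bound {d k : ℕ} (M : Matrix (Fin d) (Fin k) ℝ) (x : Fin k → ℝ)
    (c X : ℝ) (hM : ∀ i j, |M i j| ≤ c) (hx : ∀ i, |x i| ≤ X) :
    ∀ i, |(M *ᵥ x) i| ≤ k * c * X := by
  intro i
  calc |(M *ᵥ x) i| ≤ ∑ j, |M i j| * |x j| := by
        simp only [Matrix.mulVec, dotProduct]
        refine (Finset.abs_sum_le_sum_abs _ _).trans ?_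
        apply Finset.sum_le_sum; intro j _; rw [abs_mul]
    _ ≤ ∑ _j : Fin k, c * X := by
        apply Finset.sum_le_sum; intro j _
        exact mul_le_mul (hM i j) (hx j) (abs_nonneg _) ((abs_nonneg _).trans (hM i j))
    _ = k * c * X := by simp [Finset.sum_const]; ring

lemma abs_le_evnorm {k : ℕ} (x : Fin k → ℝ) (i : Fin k) : |x i| ≤ evnorm x := by
  rw [evnorm, ← Real.sqrt_sq_eq_abs]
  apply Real.sqrt_le_sqrt
  simp only [dotProduct]
  calc x i ^ 2 = x i * x i := sq (x i) ▸ by ring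
    _ ≤ ∑ j, x j * x j := Finset.single_le_sum (f := fun j => x j * x j)
        (fun j _ => mul_self_nonneg _) (Finset.mem_univ i)

lemma evnorm_nonneg {k : ℕ} (x : Fin k → ℝ) : 0 ≤ evnorm x := Real.sqrt_nonneg _

lemma gauss_log_ratio {k : ℕ} (S1 S2 : Matrix (Fin k) (Fin k) ℝ)
    (h1 : 0 < S1.det) (h2 : 0 < S2.det) (μ1 μ2 x : Fin k → ℝ) :
    Real.log (gaussDensity k S1 μ1 x / gaussDensity k S2 μ2 x)
      = -(1/2) * Real.log S1.det + (1/2) * Real.log S2.det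
        + (-(1 / 2) * ((x - μ1) ⬝ᵥ (S1⁻¹ *ᵥ (x - μ1))))
        - (-(1 / 2) * ((x - μ2) ⬝ᵥ (S2⁻¹ *ᵥ (x - μ2)))) := by
  have hπ : (0:ℝ) < (2 * π) ^ (-(k : ℝ) / 2) := Real.rpow_pos_of_pos (by positivity) _
  have hd1 : (0:ℝ) < S1.det ^ (-(1:ℝ)/2) := Real.rpow_pos_of_pos h1 _
  have hd2 : (0:ℝ) < S2.det ^ (-(1:ℝ)/2) := Real.rpow_pos_of_pos h2 _
  unfold gaussDensity
  rw [Real.log_div (by positivity) (by positivity)]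
  rw [Real.log_mul (by positivity) (Real.exp_ne_zero _),
    Real.log_mul (by positivity) (Real.exp_ne_zero _),
    Real.log_mul hπ.ne' hd1.ne', Real.log_mul hπ.ne' hd2.ne', Real.log_exp, Real.log_exp,
    Real.log_rpow h1, Real.log_rpow h2]
  ring

lemma smul_matrix_inv {k : ℕ} (c : ℝ) (hc : c ≠ 0) (A : Matrix (Fin k) (Fin k) ℝ)
    (hA : IsUnit A.det) : (c • A)⁻¹ = c⁻¹ • A⁻¹ := by
  have : Invertible c := invertibleOfNonzero hc
  have h := Matrix.inv_smul (A := A) c hA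
  rw [invOf_eq_inv c] at h
  exact h

lemma dot_sym {d : ℕ} (B : Matrix (Fin d) (Fin d) ℝ) (hB : Bᵀ = B) (x y : Fin d → ℝ) :
    x ⬝ᵥ (B *ᵥ y) = y ⬝ᵥ (B *ᵥ x) := by
  rw [Matrix.dotProduct_mulVec]
  conv_lhs => rw [← hB, Matrix.vecMul_transpose]
  exact dotProduct_comm _ _

lemma quad_decomp {d : ℕ} (B E : Matrix (Fin d) (Fin d) ℝ) (hB : Bᵀ = B)
    (u r D z ν ρ : Fin d → ℝ) (hr : r = D + ρ) (hu : u = z + ν) :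
    -(1/2) * ((u - r) ⬝ᵥ ((B + E) *ᵥ (u - r))) + (1/2) * (u ⬝ᵥ (B *ᵥ u))
      - D ⬝ᵥ (B *ᵥ z) + (1/2) * (D ⬝ᵥ (B *ᵥ D))
    = -(1/2) * ((u - r) ⬝ᵥ (E *ᵥ (u - r))) + ρ ⬝ᵥ (B *ᵥ u) + D ⬝ᵥ (B *ᵥ ν)
      - (1/2) * (ρ ⬝ᵥ (B *ᵥ r)) - (1/2) * (D ⬝ᵥ (B *ᵥ ρ)) := by
  have sym := dot_sym B hB
  subst hr hu
  simp only [Matrix.add_mulVec, Matrix.mulVec_add, Matrix.mulVec_sub, Matrix.sub_mulVec,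
    dotProduct_add, dotProduct_sub, add_dotProduct, sub_dotProduct,
    sym z ν, sym z ρ, sym z D, sym ν ρ, sym ν D, sym ρ D]
  ring

lemma eventually_uniform {p : ℕ} (θ₀ : Fin p → ℝ) (a : ℕ → ℝ)
    (ha_pos : ∀ n, 0 < a n) (ha : Tendsto a atTop atTop)
    (K : Set (Fin p → ℝ)) (R : ℝ) (hR : ∀ t ∈ K, ‖t‖ ≤ R)
    (P : (Fin p → ℝ) → Prop) (hP : ∀ᶠ θ in 𝓝 θ₀, P θ) :
    ∀ᶠ n in atTop, ∀ t ∈ K, P (θ₀ + (a n)⁻¹ • t) := by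
  rw [Metric.eventually_nhds_iff] at hP
  obtain ⟨δ, hδ, hPδ⟩ := hP
  have hinv : Tendsto (fun n => (a n)⁻¹ * R) atTop (𝓝 0) := by
    simpa using (ha.inv_tendsto_atTop).mul_const R
  filter_upwards [hinv.eventually (eventually_lt_nhds hδ)] with n hn t ht
  apply hPδ
  rw [dist_eq_norm, add_sub_cancel_left, norm_smul]
  calc ‖(a n)⁻¹‖ * ‖t‖ ≤ (a n)⁻¹ * R := by
        rw [Real.norm_eq_abs, abs_of_pos (inv_pos.mpr (ha_pos n))]
        exact mul_le_mul_of_nonneg_left (hR t ht) (le_of_lt (inv_pos.mpr (ha_pos n)))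
    _ < δ := by simpa using hn

lemma tendstoInMeasure_of_bound {d : ℕ} {Ω : Type*} [MeasureSpace Ω]
    (G : ℕ → Ω → ℝ) (W : ℕ → Ω → (Fin d → ℝ))
    (hG0 : ∀ n ω, 0 ≤ G n ω)
    (hbound : ∀ e : ℝ, 0 < e → ∀ᶠ n in atTop, ∀ ω, G n ω ≤ e * (1 + evnorm (W n ω))^2)
    (htight : ∀ δ > (0:ℝ), ∃ M : ℝ, ∀ᶠ n in atTop,
      (volume {ω | M ≤ evnorm (W n ω)}) ≤ ENNReal.ofReal δ) :
    TendstoInMeasure (volume : Measure Ω) G atTop (fun _ => (0:ℝ)) := by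
  rw [tendstoInMeasure_iff_dist]
  intro ε hε
  rw [ENNReal.tendsto_atTop_zero]
  intro ε' hε'
  obtain ⟨δ, hδpos, hδle⟩ : ∃ δ : ℝ, 0 < δ ∧ ENNReal.ofReal δ ≤ ε' := by
    rcases eq_top_or_lt_top ε' with h | h
    · exact ⟨1, one_pos, h ▸ le_top⟩
    · exact ⟨ε'.toReal, ENNReal.toReal_pos hε'.ne' h.ne,
        le_of_eq (ENNReal.ofReal_toReal h.ne)⟩
  obtain ⟨M, hM⟩ := htight δ hδpos
  set M' := max M 0 with hM'def
  have hM'0 : (0:ℝ) ≤ M' := le_max_right _ _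
  have he : (0:ℝ) < ε / (2 * (1 + M')^2) := by positivity
  have hev := hbound _ he
  rw [eventually_atTop] at hM hev
  obtain ⟨N1, hN1⟩ := hM
  obtain ⟨N2, hN2⟩ := hev
  refine ⟨max N1 N2, fun n hn => ?_⟩
  have h1 := hN1 n (le_trans (le_max_left _ _) hn)
  have h2 := hN2 n (le_trans (le_max_right _ _) hn)
  refine le_trans (le_trans (measure_mono ?_) h1) hδle
  intro ω hω
  simp only [Set.mem_setOf_eq] at hω ⊢
  by_contra hc
  push_neg at hc
  have hev' : evnorm (W n ω) < M' := lt_of_lt_of_le hc (le_max_left _ _)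
  have hlt : G n ω < ε := by
    calc G n ω ≤ ε / (2 * (1 + M')^2) * (1 + evnorm (W n ω))^2 := h2 ω
      _ ≤ ε / (2 * (1 + M')^2) * (1 + M')^2 := by
          apply mul_le_mul_of_nonneg_left _ (le_of_lt he)
          apply pow_le_pow_left₀ (by linarith [evnorm_nonneg (W n ω)]) (by linarith)
      _ = ε / 2 := by field_simp
      _ < ε := by linarith
  rw [Real.dist_eq, sub_zero, abs_of_nonneg (hG0 n ω)] at hω
  linarith

lemma zeta_bound (X e : ℝ) (hX : 0 ≤ X) (he : 0 < e) : X * (e / (4 * X + 4)) ≤ e / 4 := by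
  rw [mul_div_assoc', div_le_div_iff₀ (by linarith) (by norm_num)]
  nlinarith

lemma abs_add_six (x1 x2 x3 x4 x5 x6 : ℝ) :
    |x1 + x2 + x3 + x4 + x5 + x6| ≤ |x1| + |x2| + |x3| + |x4| + |x5| + |x6| := by
  calc |x1 + x2 + x3 + x4 + x5 + x6| ≤ |x1 + x2 + x3 + x4 + x5| + |x6| := abs_add_le _ _
    _ ≤ |x1 + x2 + x3 + x4| + |x5| + |x6| := by gcongr; exact abs_add_le _ _
    _ ≤ |x1 + x2 + x3| + |x4| + |x5| + |x6| := by gcongr; exact abs_add_le _ _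
    _ ≤ |x1 + x2| + |x3| + |x4| + |x5| + |x6| := by gcongr; exact abs_add_le _ _
    _ ≤ |x1| + |x2| + |x3| + |x4| + |x5| + |x6| := by gcongr; exact abs_add_le _ _

lemma scaled_quad {k : ℕ} (an : ℝ) (han : an ≠ 0) (M : Matrix (Fin k) (Fin k) ℝ)
    (y : Fin k → ℝ) :
    (an⁻¹ • y) ⬝ᵥ ((an^2 • M) *ᵥ (an⁻¹ • y)) = y ⬝ᵥ (M *ᵥ y) := by
  rw [Matrix.smul_mulVec, Matrix.mulVec_smul, smul_dotProduct, dotProduct_smul,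
    dotProduct_smul, smul_eq_mul, smul_eq_mul, smul_eq_mul]
  field_simp

end Helpers

set_option maxHeartbeats 2000000 in
theorem gaussian_model_LAN_expansion (p d : ℕ)
    (Ω : Type*) [MeasureSpace Ω] [IsProbabilityMeasure (volume : Measure Ω)]
    (θ₀ : Fin p → ℝ)
    (s : (Fin p → ℝ) → (Fin d → ℝ)) (hs : ContDiff ℝ 1 s)
    (A : (Fin p → ℝ) → Matrix (Fin d) (Fin d) ℝ)
    (hA : ∀ i j, ContDiff ℝ 1 (fun θ => A θ i j))
    (hApos : ∀ᶠ θ in 𝓝 θ₀, (A θ).PosDef)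
    (Ds : Matrix (Fin d) (Fin p) ℝ)
    (hDs : HasFDerivAt s (LinearMap.toContinuousLinearMap Ds.mulVecLin) θ₀)
    (hIrank : (Dsᵀ * (A θ₀)⁻¹ * Ds).rank = p)
    (a : ℕ → ℝ) (ha_pos : ∀ n, 0 < a n) (ha : Tendsto a atTop atTop)
    (ε : ℕ → ℝ) (hε_pos : ∀ n, 0 < ε n)
    (cε : ℝ) (hcε : Tendsto (fun n => a n * ε n) atTop (𝓝 cε))
    (v : Fin d → ℝ)
    (Asqrt : Matrix (Fin d) (Fin d) ℝ)
    (hsq : Asqrt * Asqrt = A θ₀) (hsym : Asqrtᵀ = Asqrt)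
    (Wobs : ℕ → Ω → (Fin d → ℝ)) (hW_meas : ∀ n, Measurable (Wobs n))
    (hW_tight : ∀ δ > (0 : ℝ), ∃ M : ℝ, ∀ᶠ n in atTop,
      (volume {ω | M ≤ evnorm (Wobs n ω)}) ≤ ENNReal.ofReal δ) :
    ∀ Kset : Set (Fin p → ℝ), IsCompact Kset →
      TendstoInMeasure (volume : Measure Ω)
        (fun n ω =>
          ⨆ t ∈ Kset,
            |Real.log
                (gaussDensity d ((a n) ^ (-2 : ℝ) • A (θ₀ + (a n)⁻¹ • t))
                    (s (θ₀ + (a n)⁻¹ • t))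
                    (s θ₀ + (a n)⁻¹ • (Asqrt *ᵥ Wobs n ω) + ε n • v) /
                  gaussDensity d ((a n) ^ (-2 : ℝ) • A θ₀) (s θ₀)
                    (s θ₀ + (a n)⁻¹ • (Asqrt *ᵥ Wobs n ω) + ε n • v)) -
              t ⬝ᵥ ((Dsᵀ * (A θ₀)⁻¹ * Ds) *ᵥ
                (((Dsᵀ * (A θ₀)⁻¹ * Ds)⁻¹ * Dsᵀ * (A θ₀)⁻¹) *ᵥ
                  (Asqrt *ᵥ Wobs n ω + cε • v))) +
              (1 / 2) * (t ⬝ᵥ ((Dsᵀ * (A θ₀)⁻¹ * Ds) *ᵥ t))|)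
        atTop (fun _ => (0 : ℝ)) := by
  intro Kset hK
  -- basic matrix facts
  have hA₀ : (A θ₀).PosDef := hApos.self_of_nhds
  have hdet₀ : 0 < (A θ₀).det := hA₀.det_pos
  have hdet₀u : IsUnit (A θ₀).det := (ne_of_gt hdet₀).isUnit
  have hBsym : ((A θ₀)⁻¹)ᵀ = (A θ₀)⁻¹ := by
    have h1 : ((A θ₀)⁻¹).IsHermitian := hA₀.isHermitian.inv
    rw [← Matrix.conjTranspose_eq_transpose_of_trivial]
    exact h1
  have hIunit : IsUnit (Dsᵀ * (A θ₀)⁻¹ * Ds).det := rank_full_isUnit _ hIrank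
  have hAcont : Continuous A := continuous_matrix fun i j => (hA i j).continuous
  -- compactness bound
  obtain ⟨R₀, hR₀⟩ := isBounded_iff_forall_norm_le.mp hK.isBounded
  set R := max R₀ 0 with hRdef
  have hR0 : (0:ℝ) ≤ R := le_max_right _ _
  have hR : ∀ t ∈ Kset, ‖t‖ ≤ R := fun t ht => (hR₀ t ht).trans (le_max_left _ _)
  -- entry bounds
  obtain ⟨CA, hCA0, hCA⟩ := entry_bound Asqrt
  obtain ⟨Cv, hCv0, hCv⟩ := vec_entry_bound v
  obtain ⟨CB, hCB0, hCB⟩ := entry_bound ((A θ₀)⁻¹)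
  obtain ⟨CDs, hCDs0, hCDs⟩ := entry_bound Ds
  set Cε := |cε| + 1 with hCεdef
  have hCε0 : (0:ℝ) ≤ Cε := by positivity
  set CD : ℝ := p * CDs * R with hCDdef
  have hCD0 : (0:ℝ) ≤ CD := by positivity
  set Cu : ℝ := d * CA + Cε * Cv with hCudef
  have hCu0 : (0:ℝ) ≤ Cu := by positivity
  set Cr : ℝ := CD + 1 with hCrdef
  have hCr0 : (0:ℝ) ≤ Cr := by positivity
  clear_value R Cε CD Cu Cr
  apply tendstoInMeasure_of_bound _ Wobs
  · intro n ω
    apply Real.iSup_nonneg; intro t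
    apply Real.iSup_nonneg; intro _
    exact abs_nonneg _
  · -- main bound
    intro e he
    set Cur : ℝ := Cu + Cr with hCurdef
    have hCur0 : (0:ℝ) ≤ Cur := by positivity
    set X2 : ℝ := (d*d : ℝ) * Cur^2 with hX2def
    set X3 : ℝ := (d*d : ℝ) * CB * (Cu + Cr + CD) with hX3def
    set X4 : ℝ := (d*d : ℝ) * CB * CD * Cv with hX4def
    have hX2nn : (0:ℝ) ≤ X2 := by
      rw [hX2def]; positivity
    have hX3nn : (0:ℝ) ≤ X3 := by
      rw [hX3def]
      exact mul_nonneg (mul_nonneg (by positivity) hCB0) (by linarith)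
    have hX4nn : (0:ℝ) ≤ X4 := by
      rw [hX4def]
      exact mul_nonneg (mul_nonneg (mul_nonneg (by positivity) hCB0) hCD0) hCv0
    clear_value Cur X2 X3 X4
    set ζE : ℝ := e / (4*X2 + 4) with hζEdef
    have hζE : 0 < ζE := div_pos he (by linarith only [hX2nn])
    set ζρ : ℝ := min 1 (e / (4*X3 + 4)) with hζρdef
    have hζρ : 0 < ζρ := lt_min one_pos (div_pos he (by linarith only [hX3nn]))
    have hζρ1 : ζρ ≤ 1 := min_le_left _ _
    set ζν : ℝ := e / (4*X4 + 4) with hζνdef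
    have hζν : 0 < ζν := div_pos he (by linarith only [hX4nn])
    clear_value ζE ζρ ζν
    have hdetc : ContinuousAt (fun θ => (A θ).det) θ₀ := (hAcont.matrix_det).continuousAt
    have hlogcont : ContinuousAt (fun θ => Real.log (A θ).det) θ₀ :=
      ContinuousAt.comp (x := θ₀) (g := Real.log) (Real.continuousAt_log (ne_of_gt hdet₀)) hdetc
    have hPlog : ∀ᶠ θ in 𝓝 θ₀, |Real.log (A θ).det - Real.log (A θ₀).det| ≤ e/2 := by
      filter_upwards [Metric.tendsto_nhds.mp hlogcont (e/2) (by positivity)] with θ hθ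
      rw [Real.dist_eq] at hθ; exact hθ.le
    have hinvcont : ContinuousAt (fun θ => (A θ)⁻¹) θ₀ := by
      have h1 : ContinuousAt Ring.inverse ((A θ₀).det) := by
        rw [Ring.inverse_eq_inv']
        exact continuousAt_inv₀ (ne_of_gt hdet₀)
      exact (continuousAt_matrix_inv (A θ₀) h1).comp hAcont.continuousAt
    have hPE : ∀ᶠ θ in 𝓝 θ₀, ∀ i j, |(A θ)⁻¹ i j - (A θ₀)⁻¹ i j| ≤ ζE := by
      rw [eventually_all]; intro i
      rw [eventually_all]; intro j
      have hij : ContinuousAt (fun θ => (A θ)⁻¹ i j) θ₀ :=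
        ((continuous_apply j).continuousAt.comp
          ((continuous_apply i).continuousAt.comp hinvcont))
      filter_upwards [Metric.tendsto_nhds.mp hij ζE hζE] with θ hθ
      rw [Real.dist_eq] at hθ; exact hθ.le
    have hPtay : ∀ᶠ θ in 𝓝 θ₀, ‖s θ - s θ₀ - Ds *ᵥ (θ - θ₀)‖ ≤ ζρ/(R+1) * ‖θ - θ₀‖ := by
      have hlo := hDs.isLittleO.def (c := ζρ/(R+1)) (div_pos hζρ (by linarith only [hR0]))
      filter_upwards [hlo] with θ hθ
      simpa [Matrix.mulVecLin_apply] using hθ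
    have hEv1 := eventually_uniform θ₀ a ha_pos ha Kset R hR _ hApos
    have hEv2 := eventually_uniform θ₀ a ha_pos ha Kset R hR _ hPlog
    have hEv3 := eventually_uniform θ₀ a ha_pos ha Kset R hR _ hPE
    have hEv4 := eventually_uniform θ₀ a ha_pos ha Kset R hR _ hPtay
    have hEv5 : ∀ᶠ n in atTop, |a n * ε n - cε| ≤ ζν := by
      filter_upwards [Metric.tendsto_nhds.mp hcε ζν hζν] with n hn
      rw [Real.dist_eq] at hn; exact hn.le
    have hEv6 : ∀ᶠ n in atTop, |a n * ε n| ≤ Cε := by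
      filter_upwards [Metric.tendsto_nhds.mp hcε 1 one_pos] with n hn
      rw [Real.dist_eq] at hn
      calc |a n * ε n| = |(a n * ε n - cε) + cε| := by ring_nf
        _ ≤ |a n * ε n - cε| + |cε| := abs_add_le _ _
        _ ≤ Cε := by rw [hCεdef]; linarith
    filter_upwards [hEv1, hEv2, hEv3, hEv4, hEv5, hEv6] with n h1 h2 h3 h4 h5 h6
    intro ω
    have hb0 : 0 ≤ e * (1 + evnorm (Wobs n ω))^2 := by positivity
    apply Real.iSup_le _ hb0
    intro t
    apply Real.iSup_le _ hb0
    intro ht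
    -- ===== core pointwise estimate =====
    have han : 0 < a n := ha_pos n
    have han' : a n ≠ 0 := ne_of_gt han
    set w := Wobs n ω with hwdef
    set m := evnorm w with hmdef
    have hm0 : 0 ≤ m := evnorm_nonneg w
    have hwi : ∀ i, |w i| ≤ m := fun i => abs_le_evnorm w i
    set θt := θ₀ + (a n)⁻¹ • t with hθtdef
    have hPDt : (A θt).PosDef := h1 t ht
    have hdet_t : 0 < (A θt).det := hPDt.det_pos
    have hdet_tu : IsUnit (A θt).det := (ne_of_gt hdet_t).isUnit
    set x : Fin d → ℝ := s θ₀ + (a n)⁻¹ • (Asqrt *ᵥ w) + ε n • v with hxdef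
    set zz : Fin d → ℝ := Asqrt *ᵥ w + cε • v with hzzdef
    set u : Fin d → ℝ := Asqrt *ᵥ w + (a n * ε n) • v with hudef
    set r : Fin d → ℝ := (a n) • (s θt - s θ₀) with hrdef
    set Dt : Fin d → ℝ := Ds *ᵥ t with hDtdef
    set ρv : Fin d → ℝ := r - Dt with hρdef
    set νv : Fin d → ℝ := (a n * ε n - cε) • v with hνdef
    set Ev : Matrix (Fin d) (Fin d) ℝ := (A θt)⁻¹ - (A θ₀)⁻¹ with hEdef
    clear_value x zz u r Dt ρv νv Ev
    -- entrywise bounds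
    have hASw : ∀ i, |(Asqrt *ᵥ w) i| ≤ d * CA * m := mulVec_entry_bound Asqrt w CA m hCA hwi
    have hu_b : ∀ i, |u i| ≤ Cu * (1 + m) := by
      intro i
      have e1 : |u i| ≤ |(Asqrt *ᵥ w) i| + |a n * ε n| * |v i| := by
        calc |u i| = |(Asqrt *ᵥ w) i + (a n * ε n) * v i| := by
              rw [hudef]; simp [Pi.add_apply]
          _ ≤ |(Asqrt *ᵥ w) i| + |(a n * ε n) * v i| := abs_add_le _ _
          _ = |(Asqrt *ᵥ w) i| + |a n * ε n| * |v i| := by rw [abs_mul]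
      have e2 : |a n * ε n| * |v i| ≤ Cε * Cv :=
        mul_le_mul h6 (hCv i) (abs_nonneg _) hCε0
      have e3 := hASw i
      have e4 : |u i| ≤ d * CA * m + Cε * Cv := by linarith only [e1, e2, e3]
      refine e4.trans ?_
      rw [hCudef]
      have k1 : (0:ℝ) ≤ (d:ℝ) * CA := by positivity
      have k2 : (0:ℝ) ≤ Cε * Cv := mul_nonneg hCε0 hCv0
      nlinarith only [hm0, k1, k2, mul_nonneg k2 hm0]
    have htR : ∀ j, |t j| ≤ R := by
      intro j
      have := norm_le_pi_norm t j
      rw [Real.norm_eq_abs] at this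
      exact this.trans (hR t ht)
    have hDt_b : ∀ i, |Dt i| ≤ CD := by
      intro i
      have q := mulVec_entry_bound Ds t CDs R hCDs htR i
      rw [hCDdef, hDtdef]
      exact q
    have hθtsub : θt - θ₀ = (a n)⁻¹ • t := by rw [hθtdef]; exact add_sub_cancel_left _ _
    have hρ_eq : ρv = (a n) • (s θt - s θ₀ - (a n)⁻¹ • Dt) := by
      rw [hρdef, hrdef]
      simp only [smul_sub, smul_smul, mul_inv_cancel₀ han', one_smul]
    have hρ_b : ∀ i, |ρv i| ≤ ζρ := by
      have h4' := h4 t ht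
      rw [hθtsub, Matrix.mulVec_smul, ← hDtdef] at h4'
      have hnorm : ‖(a n)⁻¹ • t‖ ≤ (a n)⁻¹ * R := by
        rw [norm_smul, Real.norm_eq_abs, abs_of_pos (inv_pos.mpr han)]
        exact mul_le_mul_of_nonneg_left (hR t ht) (inv_pos.mpr han).le
      have hnρ : ‖ρv‖ ≤ ζρ := by
        rw [hρ_eq, norm_smul, Real.norm_eq_abs, abs_of_pos han]
        calc a n * ‖s θt - s θ₀ - (a n)⁻¹ • Dt‖
            ≤ a n * (ζρ/(R+1) * ((a n)⁻¹ * R)) := by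
              apply mul_le_mul_of_nonneg_left _ han.le
              exact h4'.trans (mul_le_mul_of_nonneg_left hnorm (by positivity))
          _ = ζρ * (R / (R+1)) := by
              have hR1 : R + 1 ≠ 0 := by
                have : (0:ℝ) < R + 1 := by linarith only [hR0]
                exact ne_of_gt this
              field_simp
          _ ≤ ζρ * 1 := by
              apply mul_le_mul_of_nonneg_left _ hζρ.le
              rw [div_le_one (by linarith only [hR0])]; linarith only []
          _ = ζρ := mul_one _
      intro i
      have := norm_le_pi_norm ρv i
      rw [Real.norm_eq_abs] at this
      exact this.trans hnρ
    have hr_split : r = Dt + ρv := by rw [hρdef]; abel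
    have hr_b : ∀ i, |r i| ≤ Cr := by
      intro i
      have : r i = Dt i + ρv i := by rw [hr_split]; simp
      rw [this, hCrdef]
      calc |Dt i + ρv i| ≤ |Dt i| + |ρv i| := abs_add_le _ _
        _ ≤ CD + 1 := add_le_add (hDt_b i) ((hρ_b i).trans hζρ1)
    have hur_b : ∀ i, |(u - r) i| ≤ Cur * (1 + m) := by
      intro i
      have : |(u - r) i| ≤ |u i| + |r i| := by
        rw [Pi.sub_apply]; exact abs_sub _ _
      refine this.trans ?_
      have q1 := hu_b i; have q2 := hr_b i
      rw [hCurdef]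
      nlinarith only [hm0, hCr0, q1, q2, mul_nonneg hCr0 hm0]
    have hν_b : ∀ i, |νv i| ≤ ζν * Cv := by
      intro i
      have : |νv i| = |a n * ε n - cε| * |v i| := by rw [hνdef]; simp [abs_mul]
      rw [this]
      exact mul_le_mul h5 (hCv i) (abs_nonneg _) hζν.le
    have hE_b : ∀ i j, |Ev i j| ≤ ζE := by
      intro i j
      have := h3 t ht i j
      simpa [hEdef, Matrix.sub_apply] using this
    have hlogd : |Real.log (A θt).det - Real.log (A θ₀).det| ≤ e/2 := h2 t ht
    -- exact log-ratio computation
    have hc_eq : (a n) ^ (-2 : ℝ) = ((a n)^2)⁻¹ := by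
      rw [show (-2:ℝ) = -((2:ℕ):ℝ) by norm_num, Real.rpow_neg han.le, Real.rpow_natCast]
    have hcpos : 0 < ((a n)^2)⁻¹ := by positivity
    have hcne : ((a n)^2)⁻¹ ≠ (0:ℝ) := ne_of_gt hcpos
    have hdet_smul : ∀ (M : Matrix (Fin d) (Fin d) ℝ),
        ((((a n)^2)⁻¹ : ℝ) • M).det = (((a n)^2)⁻¹)^d * M.det := by
      intro M; rw [Matrix.det_smul]; simp
    have hSdet_t : 0 < ((((a n)^2)⁻¹ : ℝ) • (A θt)).det := by
      rw [hdet_smul]; positivity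
    have hSdet_0 : 0 < ((((a n)^2)⁻¹ : ℝ) • (A θ₀)).det := by
      rw [hdet_smul]; positivity
    have hinv_t : ((((a n)^2)⁻¹ : ℝ) • (A θt))⁻¹ = ((a n)^2 : ℝ) • (A θt)⁻¹ := by
      rw [smul_matrix_inv _ hcne _ hdet_tu, inv_inv]
    have hinv_0 : ((((a n)^2)⁻¹ : ℝ) • (A θ₀))⁻¹ = ((a n)^2 : ℝ) • (A θ₀)⁻¹ := by
      rw [smul_matrix_inv _ hcne _ hdet₀u, inv_inv]
    have hsmu : (a n)⁻¹ • u = (a n)⁻¹ • (Asqrt *ᵥ w) + ε n • v := by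
      rw [hudef, smul_add, smul_smul, ← mul_assoc, inv_mul_cancel₀ han', one_mul]
    have hx0 : x - s θ₀ = (a n)⁻¹ • u := by rw [hsmu, hxdef]; abel
    have hrsm : (a n)⁻¹ • r = s θt - s θ₀ := by
      rw [hrdef, smul_smul, inv_mul_cancel₀ han', one_smul]
    have hxt : x - s θt = (a n)⁻¹ • (u - r) := by rw [smul_sub, hrsm, ← hx0]; abel
    have hquad_t : (x - s θt) ⬝ᵥ (((((a n)^2)⁻¹ : ℝ) • (A θt))⁻¹ *ᵥ (x - s θt))
        = (u - r) ⬝ᵥ ((A θt)⁻¹ *ᵥ (u - r)) := by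
      rw [hinv_t, hxt]; exact scaled_quad (a n) han' _ _
    have hquad_0 : (x - s θ₀) ⬝ᵥ (((((a n)^2)⁻¹ : ℝ) • (A θ₀))⁻¹ *ᵥ (x - s θ₀))
        = u ⬝ᵥ ((A θ₀)⁻¹ *ᵥ u) := by
      rw [hinv_0, hx0]; exact scaled_quad (a n) han' _ _
    have hlogdet_t : Real.log (((((a n)^2)⁻¹ : ℝ) • (A θt)).det)
        = Real.log ((((a n)^2)⁻¹ : ℝ)^d) + Real.log (A θt).det := by
      rw [hdet_smul, Real.log_mul (by positivity) (ne_of_gt hdet_t)]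
    have hlogdet_0 : Real.log (((((a n)^2)⁻¹ : ℝ) • (A θ₀)).det)
        = Real.log ((((a n)^2)⁻¹ : ℝ)^d) + Real.log (A θ₀).det := by
      rw [hdet_smul, Real.log_mul (by positivity) (ne_of_gt hdet₀)]
    have hlog2 : Real.log
          (gaussDensity d ((a n) ^ (-2 : ℝ) • A θt) (s θt) x /
            gaussDensity d ((a n) ^ (-2 : ℝ) • A θ₀) (s θ₀) x)
        = -(1/2)*(Real.log (A θt).det - Real.log (A θ₀).det)
          + (-(1/2) * ((u - r) ⬝ᵥ ((A θt)⁻¹ *ᵥ (u - r))) + (1/2) * (u ⬝ᵥ ((A θ₀)⁻¹ *ᵥ u))) := by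
      rw [hc_eq, gauss_log_ratio _ _ hSdet_t hSdet_0 (s θt) (s θ₀) x,
        hquad_t, hquad_0, hlogdet_t, hlogdet_0]
      ring
    -- rewriting the target terms
    have hIβ : (Dsᵀ * (A θ₀)⁻¹ * Ds) * ((Dsᵀ * (A θ₀)⁻¹ * Ds)⁻¹ * Dsᵀ * (A θ₀)⁻¹)
        = Dsᵀ * (A θ₀)⁻¹ := by
      calc (Dsᵀ * (A θ₀)⁻¹ * Ds) * ((Dsᵀ * (A θ₀)⁻¹ * Ds)⁻¹ * Dsᵀ * (A θ₀)⁻¹)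
          = ((Dsᵀ * (A θ₀)⁻¹ * Ds) * (Dsᵀ * (A θ₀)⁻¹ * Ds)⁻¹) * (Dsᵀ * (A θ₀)⁻¹) := by
            simp only [Matrix.mul_assoc]
        _ = Dsᵀ * (A θ₀)⁻¹ := by rw [Matrix.mul_nonsing_inv _ hIunit, Matrix.one_mul]
    have hlin : t ⬝ᵥ ((Dsᵀ * (A θ₀)⁻¹ * Ds) *ᵥ
          (((Dsᵀ * (A θ₀)⁻¹ * Ds)⁻¹ * Dsᵀ * (A θ₀)⁻¹) *ᵥ zz))
        = Dt ⬝ᵥ ((A θ₀)⁻¹ *ᵥ zz) := by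
      rw [Matrix.mulVec_mulVec, hIβ, ← Matrix.mulVec_mulVec,
        Matrix.dotProduct_mulVec, Matrix.vecMul_transpose, hDtdef]
    have hquadT : t ⬝ᵥ ((Dsᵀ * (A θ₀)⁻¹ * Ds) *ᵥ t) = Dt ⬝ᵥ ((A θ₀)⁻¹ *ᵥ Dt) := by
      rw [show (Dsᵀ * (A θ₀)⁻¹ * Ds) *ᵥ t = Dsᵀ *ᵥ ((A θ₀)⁻¹ *ᵥ (Ds *ᵥ t)) by
            rw [Matrix.mulVec_mulVec, Matrix.mulVec_mulVec],
        Matrix.dotProduct_mulVec, Matrix.vecMul_transpose, hDtdef]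
    have hAt_split : (A θt)⁻¹ = (A θ₀)⁻¹ + Ev := by rw [hEdef]; abel
    have hu_split : u = zz + νv := by
      rw [hudef, hzzdef, hνdef, add_assoc, ← add_smul]
      ring_nf
    have hQ := quad_decomp ((A θ₀)⁻¹) Ev hBsym u r Dt zz νv ρv hr_split hu_split
    have hF : Real.log
          (gaussDensity d ((a n) ^ (-2 : ℝ) • A θt) (s θt) x /
            gaussDensity d ((a n) ^ (-2 : ℝ) • A θ₀) (s θ₀) x)
          - t ⬝ᵥ ((Dsᵀ * (A θ₀)⁻¹ * Ds) *ᵥ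
              (((Dsᵀ * (A θ₀)⁻¹ * Ds)⁻¹ * Dsᵀ * (A θ₀)⁻¹) *ᵥ zz))
          + (1 / 2) * (t ⬝ᵥ ((Dsᵀ * (A θ₀)⁻¹ * Ds) *ᵥ t))
        = -(1/2)*(Real.log (A θt).det - Real.log (A θ₀).det)
          + (-(1/2) * ((u - r) ⬝ᵥ (Ev *ᵥ (u - r))))
          + ρv ⬝ᵥ ((A θ₀)⁻¹ *ᵥ u) + Dt ⬝ᵥ ((A θ₀)⁻¹ *ᵥ νv)
          + (-(1/2) * (ρv ⬝ᵥ ((A θ₀)⁻¹ *ᵥ r))) + (-(1/2) * (Dt ⬝ᵥ ((A θ₀)⁻¹ *ᵥ ρv))) := by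
      rw [hlog2, hlin, hquadT, hAt_split]
      linarith only [hQ]
    rw [hF]
    -- six term bounds
    have habs := abs_add_six
      (-(1/2)*(Real.log (A θt).det - Real.log (A θ₀).det))
      (-(1/2) * ((u - r) ⬝ᵥ (Ev *ᵥ (u - r))))
      (ρv ⬝ᵥ ((A θ₀)⁻¹ *ᵥ u)) (Dt ⬝ᵥ ((A θ₀)⁻¹ *ᵥ νv))
      (-(1/2) * (ρv ⬝ᵥ ((A θ₀)⁻¹ *ᵥ r))) (-(1/2) * (Dt ⬝ᵥ ((A θ₀)⁻¹ *ᵥ ρv)))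
    have hhalf : |(-(1/2) : ℝ)| = 1/2 := by norm_num
    have b1 : |(-(1/2):ℝ)*(Real.log (A θt).det - Real.log (A θ₀).det)| ≤ e/4 := by
      rw [abs_mul, hhalf]; linarith only [hlogd]
    have b2 : |(-(1/2):ℝ) * ((u - r) ⬝ᵥ (Ev *ᵥ (u - r)))|
        ≤ (1/2) * (d*d*ζE*(Cur*(1+m))*(Cur*(1+m))) := by
      rw [abs_mul, hhalf]
      exact mul_le_mul_of_nonneg_left
        (dot_bound Ev (u-r) (u-r) ζE (Cur*(1+m)) (Cur*(1+m)) hE_b hur_b hur_b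
          (mul_nonneg hCur0 (by linarith only [hm0])) hζE.le) (by norm_num)
    have b3 : |ρv ⬝ᵥ ((A θ₀)⁻¹ *ᵥ u)| ≤ d*d*CB*ζρ*(Cu*(1+m)) := by
      have q := dot_bound ((A θ₀)⁻¹) ρv u CB ζρ (Cu*(1+m)) hCB hρ_b hu_b hζρ.le hCB0
      linarith only [q]
    have b4 : |Dt ⬝ᵥ ((A θ₀)⁻¹ *ᵥ νv)| ≤ d*d*CB*CD*(ζν*Cv) := by
      have q := dot_bound ((A θ₀)⁻¹) Dt νv CB CD (ζν*Cv) hCB hDt_b hν_b hCD0 hCB0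
      linarith only [q]
    have b5 : |(-(1/2):ℝ) * (ρv ⬝ᵥ ((A θ₀)⁻¹ *ᵥ r))| ≤ (1/2)*(d*d*CB*ζρ*Cr) := by
      rw [abs_mul, hhalf]
      exact mul_le_mul_of_nonneg_left
        (dot_bound ((A θ₀)⁻¹) ρv r CB ζρ Cr hCB hρ_b hr_b hζρ.le hCB0) (by norm_num)
    have b6 : |(-(1/2):ℝ) * (Dt ⬝ᵥ ((A θ₀)⁻¹ *ᵥ ρv))| ≤ (1/2)*(d*d*CB*CD*ζρ) := by
      rw [abs_mul, hhalf]
      exact mul_le_mul_of_nonneg_left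
        (dot_bound ((A θ₀)⁻¹) Dt ρv CB CD ζρ hCB hDt_b hρ_b hCD0 hCB0) (by norm_num)
    -- numeric assembly
    have key1 : X2 * ζE ≤ e/4 := by rw [hζEdef]; exact zeta_bound X2 e hX2nn he
    have key3 : X3 * ζρ ≤ e/4 := by
      have hmin : ζρ ≤ e/(4*X3+4) := by rw [hζρdef]; exact min_le_right _ _
      calc X3 * ζρ ≤ X3 * (e/(4*X3+4)) := mul_le_mul_of_nonneg_left hmin hX3nn
        _ ≤ e/4 := zeta_bound X3 e hX3nn he
    have key4 : X4 * ζν ≤ e/4 := by rw [hζνdef]; exact zeta_bound X4 e hX4nn he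
    have s2 : (1/2) * ((d:ℝ)*d*ζE*(Cur*(1+m))*(Cur*(1+m))) ≤ (e/4)*(1+m)^2 := by
      have hrw : (1/2) * ((d:ℝ)*d*ζE*(Cur*(1+m))*(Cur*(1+m))) = (1/2)*(X2*ζE)*(1+m)^2 := by
        rw [hX2def]; ring
      rw [hrw]
      nlinarith only [sq_nonneg (1+m), key1, he.le, mul_nonneg (sub_nonneg.mpr key1) (sq_nonneg (1+m))]
    have s345 : (d:ℝ)*d*CB*ζρ*(Cu*(1+m)) + (1/2)*((d:ℝ)*d*CB*ζρ*Cr) + (1/2)*((d:ℝ)*d*CB*CD*ζρ)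
        ≤ (e/4)*(1+m)^2 := by
      have hstep : Cu*(1+m) + (1/2)*Cr + (1/2)*CD ≤ (Cu+Cr+CD)*(1+m) := by
        nlinarith only [hm0, hCu0, hCr0, hCD0, mul_nonneg hCr0 hm0, mul_nonneg hCD0 hm0]
      have hP0 : (0:ℝ) ≤ (d:ℝ)*d*CB*ζρ := mul_nonneg (mul_nonneg (by positivity) hCB0) hζρ.le
      calc (d:ℝ)*d*CB*ζρ*(Cu*(1+m)) + (1/2)*((d:ℝ)*d*CB*ζρ*Cr) + (1/2)*((d:ℝ)*d*CB*CD*ζρ)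
          = ((d:ℝ)*d*CB*ζρ) * (Cu*(1+m) + (1/2)*Cr + (1/2)*CD) := by ring
        _ ≤ ((d:ℝ)*d*CB*ζρ) * ((Cu+Cr+CD)*(1+m)) := mul_le_mul_of_nonneg_left hstep hP0
        _ = (X3*ζρ)*(1+m) := by rw [hX3def]; ring
        _ ≤ (e/4)*(1+m) := mul_le_mul_of_nonneg_right key3 (by linarith only [hm0])
        _ ≤ (e/4)*(1+m)^2 := by
            nlinarith only [hm0, he.le, mul_nonneg he.le hm0, mul_nonneg (mul_nonneg he.le hm0) hm0]
    have s4 : (d:ℝ)*d*CB*CD*(ζν*Cv) ≤ e/4 := by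
      calc (d:ℝ)*d*CB*CD*(ζν*Cv) = X4*ζν := by rw [hX4def]; ring
        _ ≤ e/4 := key4
    have h14 : e/4 ≤ (e/4)*(1+m)^2 := by
      nlinarith only [hm0, he.le, mul_nonneg he.le hm0, mul_nonneg (mul_nonneg he.le hm0) hm0]
    refine habs.trans ?_
    linarith only [b1, b2, b3, b4, b5, b6, s2, s345, s4, h14]
  · exact hW_tight
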